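/- Let a ≥ 1 and b ≥ 1 be natural numbers and θ > 0, c > 0, α_H > 0, α_L > 0, χ > 0, N > 0, β > 0 reals with v = β − 1/(2χ√N) > 0, μ = β + 1/(2χ√N), and μ < α_H/α_L. Define G(x) = (1 − e^{−θx} Σ_{p=0}^{b−1} (θx)^p/p!)^a and B_x = x/(c(α_H − α_L x)). Then χ√N · ∫_v^μ G(B_x) dx = 1 + (χ·α_H·√N/(c·α_L²)) · Σ_{p=1}^{a} Σ_{δ} Σ_{q=0}^{φ(δ)} C(φ(δ),q) · (−1/(c·α_L))^q · (−1)^p · C(a,p) · (p!/(δ_0!···δ_{b−1}!)) · (Π_{r=0}^{b−1} (θ^r/r!)^{δ_r}) · e^{ω/(c·α_L)} · A(p,δ,q), where the δ-sum runs over all tuples δ = (δ_0,…,δ_{b−1}) of nonnegative integers summing to p, φ(δ) = Σ_{r} r·δ_r, ω = pθ, φ̂ = φ(δ) − q − 2, φ_H = 1/(c·α_L) + B_v, κ_H = 1/(c·α_L) + B_μ, and A(p,δ,q) equals: ω^{−φ̂−1}·(Γ(φ̂+1, ωφ_H) − Γ(φ̂+1, ωκ_H)) if φ̂ ≥ 0;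 ∫_{ωφ_H}^∞ t^{−1} e^{−t} dt − ∫_{ωκ_H}^∞ t^{−1} e^{−t} dt if φ̂ = −1; and ω·(∫_{ωκ_H}^∞ t^{−1} e^{−t} dt − ∫_{ωφ_H}^∞ t^{−1} e^{−t} dt) + e^{−ωφ_H}/φ_H − e^{−ωκ_H}/κ_H if φ̂ = −2. Here Γ(s,x) = ∫_x^∞ t^{s−1} e^{−t} dt. (This is the exact closed form of the average BLER of the high-priority user, Theorem 1, likewise Theorem 3 with the LCS parameters.) -/

import Mathlib

open MeasureTheory Set intervalIntegral Real Finset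


lemma aux_int_nat (n : ℕ) {x : ℝ} (hx : 0 < x) :
    IntegrableOn (fun t : ℝ => t ^ (n : ℤ) * Real.exp (-t)) (Ioi x) := by
  have h := Real.GammaIntegral_convergent (s := (n : ℝ) + 1) (by positivity)
  refine ((h.mono_set (Ioi_subset_Ioi hx.le)).congr_fun ?_ measurableSet_Ioi)
  intro t ht
  have : ((n : ℝ) + 1 - 1) = (n : ℝ) := by ring
  simp only [this]
  rw [show ((n:ℝ):ℝ) = ((n:ℕ):ℝ) from rfl, Real.rpow_natCast, mul_comm, zpow_natCast]

lemma aux_int_inv {x : ℝ} (hx : 0 < x) :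
    IntegrableOn (fun t : ℝ => t⁻¹ * Real.exp (-t)) (Ioi x) := by
  have hexp : IntegrableOn (fun t : ℝ => x⁻¹ * Real.exp (-1 * t)) (Ioi x) :=
    (exp_neg_integrableOn_Ioi x one_pos).const_mul _
  refine Integrable.mono' hexp ?_ ?_
  · refine (ContinuousOn.mul ?_ (Real.continuous_exp.comp continuous_neg).continuousOn).aestronglyMeasurable measurableSet_Ioi
    exact continuousOn_id.inv₀ fun t ht => (hx.trans ht).ne'
  · filter_upwards [MeasureTheory.ae_restrict_mem measurableSet_Ioi] with t ht
    have h0 : (0:ℝ) < t := hx.trans ht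
    rw [Real.norm_eq_abs, abs_of_nonneg (by positivity)]
    rw [neg_one_mul]
    gcongr
    exact ht.le

lemma aux_split {f : ℝ → ℝ} {x y : ℝ} (hxy : x ≤ y)
    (hf : IntegrableOn f (Ioi x)) :
    (∫ t in Ioi x, f t) - (∫ t in Ioi y, f t) = ∫ t in x..y, f t := by
  have hset : Ioi x = Ioc x y ∪ Ioi y := (Set.Ioc_union_Ioi_eq_Ioi hxy).symm
  have h2 : IntegrableOn f (Ioi y) := hf.mono_set (Ioi_subset_Ioi hxy)
  have h1 : IntegrableOn f (Ioc x y) := hf.mono_set (by rw [hset]; exact subset_union_left)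
  rw [intervalIntegral.integral_of_le hxy, hset,
    MeasureTheory.setIntegral_union (Set.Ioc_disjoint_Ioi le_rfl) measurableSet_Ioi h1 h2]
  ring

lemma key_neg1 {ω x y : ℝ} (hω : 0 < ω) (hx : 0 < x) (hxy : x ≤ y) :
    ∫ u in x..y, u⁻¹ * Real.exp (-(ω * u)) =
      (∫ t in Ioi (ω * x), t⁻¹ * Real.exp (-t)) -
        ∫ t in Ioi (ω * y), t⁻¹ * Real.exp (-t) := by
  rw [aux_split (by gcongr) (aux_int_inv (by positivity))]
  have h2 : (∫ u in x..y, (ω*u)⁻¹ * Real.exp (-(ω*u)))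
      = ω⁻¹ • ∫ t in ω*x..ω*y, t⁻¹ * Real.exp (-t) :=
    integral_comp_mul_left (fun t => t⁻¹ * Real.exp (-t)) hω.ne'
  have h3 : (∫ u in x..y, (ω*u)⁻¹ * Real.exp (-(ω*u)))
      = ω⁻¹ * ∫ u in x..y, u⁻¹ * Real.exp (-(ω*u)) := by
    rw [← intervalIntegral.integral_const_mul]
    congr 1; funext u
    rw [mul_inv]; ring
  rw [h3, smul_eq_mul] at h2
  have := mul_left_cancel₀ (inv_ne_zero hω.ne') h2
  linarith [this]

lemma key_nonneg {ω x y : ℝ} (hω : 0 < ω) (hx : 0 < x) (hxy : x ≤ y) (k : ℤ) (hk : 0 ≤ k) :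
    ∫ u in x..y, u ^ k * Real.exp (-(ω * u)) =
      ω ^ (-k - 1) * ((∫ t in Ioi (ω * x), t ^ k * Real.exp (-t)) -
        ∫ t in Ioi (ω * y), t ^ k * Real.exp (-t)) := by
  lift k to ℕ using hk with n
  rw [aux_split (by gcongr) (aux_int_nat n (by positivity))]
  have h2 : (∫ u in x..y, (ω*u) ^ (n:ℤ) * Real.exp (-(ω*u)))
      = ω⁻¹ • ∫ t in ω*x..ω*y, t ^ (n:ℤ) * Real.exp (-t) :=
    integral_comp_mul_left (fun t => t ^ (n:ℤ) * Real.exp (-t)) hω.ne'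
  have h3 : (∫ u in x..y, (ω*u) ^ (n:ℤ) * Real.exp (-(ω*u)))
      = ω ^ (n:ℤ) * ∫ u in x..y, u ^ (n:ℤ) * Real.exp (-(ω*u)) := by
    rw [← intervalIntegral.integral_const_mul]
    congr 1; funext u
    rw [mul_zpow]; ring
  rw [h3, smul_eq_mul] at h2
  have h4 : (∫ t in ω*x..ω*y, t ^ (n:ℤ) * Real.exp (-t))
      = ω * (ω ^ (n:ℤ) * ∫ u in x..y, u ^ (n:ℤ) * Real.exp (-(ω*u))) := by
    rw [h2, ← mul_assoc, mul_inv_cancel₀ hω.ne', one_mul]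
  have hone : ω ^ (-(n:ℤ) - 1) * (ω * ω ^ (n:ℤ)) = 1 := by
    rw [mul_comm ω, ← zpow_add_one₀ hω.ne', ← zpow_add₀ hω.ne']
    norm_num
  rw [h4, ← mul_assoc, ← mul_assoc, mul_assoc (ω ^ (-(n:ℤ) - 1)), hone, one_mul]

lemma key_neg2 {ω x y : ℝ} (hω : 0 < ω) (hx : 0 < x) (hxy : x ≤ y) :
    ∫ u in x..y, u ^ (-2:ℤ) * Real.exp (-(ω * u)) =
      ω * ((∫ t in Ioi (ω * y), t⁻¹ * Real.exp (-t)) -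
        ∫ t in Ioi (ω * x), t⁻¹ * Real.exp (-t)) +
      Real.exp (-(ω * x)) / x - Real.exp (-(ω * y)) / y := by
  have hpos : ∀ u ∈ Set.uIcc x y, (0:ℝ) < u := by
    intro u hu
    rw [Set.uIcc_of_le hxy] at hu
    exact lt_of_lt_of_le hx hu.1
  have hder : ∀ u ∈ Set.uIcc x y,
      HasDerivAt (fun u : ℝ => -(u⁻¹ * Real.exp (-(ω*u))))
        (u ^ (-2:ℤ) * Real.exp (-(ω*u)) + ω * (u⁻¹ * Real.exp (-(ω*u)))) u := by
    intro u hu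
    have hu0 : u ≠ 0 := (hpos u hu).ne'
    have h1 : HasDerivAt (fun u:ℝ => u⁻¹) (-(u^2)⁻¹) u := hasDerivAt_inv hu0
    have h2 : HasDerivAt (fun u:ℝ => Real.exp (-(ω*u))) (Real.exp (-(ω*u)) * (-ω)) u := by
      have h3 : HasDerivAt (fun u:ℝ => -(ω*u)) (-ω) u := by
        exact ((hasDerivAt_id u).const_mul ω).neg.congr_deriv (by ring)
      exact h3.exp
    have h4 := (h1.mul h2).neg
    have hzp : (u:ℝ) ^ (-2:ℤ) = (u^2)⁻¹ := by
      rw [zpow_neg, zpow_ofNat]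
    rw [hzp]
    refine h4.congr_deriv ?_
    ring
  have hcont : ∀ (k : ℤ), ContinuousOn (fun u : ℝ => u ^ k * Real.exp (-(ω*u))) (Set.uIcc x y) := by
    intro k
    apply ContinuousOn.mul
    · exact ContinuousOn.zpow₀ continuousOn_id k (fun u hu => Or.inl (hpos u hu).ne')
    · exact (Real.continuous_exp.comp (continuous_neg.comp (continuous_const.mul continuous_id))).continuousOn
  have hint1 : IntervalIntegrable (fun u : ℝ => u ^ (-2:ℤ) * Real.exp (-(ω*u))) volume x y :=
    (hcont (-2)).intervalIntegrable
  have hint2 : IntervalIntegrable (fun u : ℝ => ω * (u⁻¹ * Real.exp (-(ω*u)))) volume x y := by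
    apply ContinuousOn.intervalIntegrable
    refine continuousOn_const.mul (ContinuousOn.mul ?_ ?_)
    · exact ContinuousOn.inv₀ continuousOn_id (fun u hu => (hpos u hu).ne')
    · exact (Real.continuous_exp.comp (continuous_neg.comp (continuous_const.mul continuous_id))).continuousOn
  have heq := intervalIntegral.integral_eq_sub_of_hasDerivAt hder (hint1.add hint2)
  rw [intervalIntegral.integral_add hint1 hint2, intervalIntegral.integral_const_mul] at heq
  have hk1 := key_neg1 hω hx hxy
  rw [hk1] at heq
  have : ∫ u in x..y, u ^ (-2:ℤ) * Real.exp (-(ω*u)) =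
      (-(y⁻¹ * Real.exp (-(ω*y))) - -(x⁻¹ * Real.exp (-(ω*x)))) -
        ω * ((∫ t in Ioi (ω * x), t⁻¹ * Real.exp (-t)) -
          ∫ t in Ioi (ω * y), t⁻¹ * Real.exp (-t)) := by linarith
  rw [this]
  field_simp
  ring


lemma key_main {c αL αH v μ : ℝ} (hc : 0 < c) (hαL : 0 < αL) (hαH : 0 < αH)
    (hv0 : 0 < v) (hvμ : v ≤ μ) (hμα : μ < αH / αL) (ω : ℝ) (hω : 0 < ω) (m : ℕ) :
    ∫ x in v..μ, (x / (c * (αH - αL * x))) ^ m * Real.exp (-(ω * (x / (c * (αH - αL * x))))) =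
      αH / (c * αL ^ 2) * ∑ q ∈ Finset.range (m + 1),
        (m.choose q : ℝ) * (-(1 / (c * αL))) ^ q * Real.exp (ω * (1 / (c * αL))) *
          ∫ u in (1 / (c * αL) + v / (c * (αH - αL * v)))..(1 / (c * αL) + μ / (c * (αH - αL * μ))),
            u ^ ((m : ℤ) - q - 2) * Real.exp (-(ω * u)) := by
  have hden : ∀ x ∈ Set.uIcc v μ, 0 < αH - αL * x := by
    intro x hx
    rw [Set.uIcc_of_le hvμ] at hx
    have h1 : x < αH / αL := lt_of_le_of_lt hx.2 hμα
    have h2 := (lt_div_iff₀ hαL).mp h1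
    linarith
  set s : ℝ := 1 / (c * αL) with hs
  have hspos : 0 < s := by positivity
  set g : ℝ → ℝ := fun x => s + x / (c * (αH - αL * x)) with hg
  set g' : ℝ → ℝ := fun x => αH / (c * (αH - αL * x) ^ 2) with hg'
  set f : ℝ → ℝ := fun u =>
    αH / (c * αL ^ 2) * ((u - s) ^ m * Real.exp (-(ω * (u - s))) * u ^ (-2 : ℤ)) with hf
  have hgderiv : ∀ x ∈ Set.uIcc v μ, HasDerivAt g (g' x) x := by
    intro x hx
    have hdx : (0:ℝ) < αH - αL * x := hden x hx
    have hdne : c * (αH - αL * x) ≠ 0 := by positivity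
    have h1 : HasDerivAt (fun x : ℝ => c * (αH - αL * x)) (c * (0 - αL * 1)) x :=
      ((hasDerivAt_const x αH).sub ((hasDerivAt_id x).const_mul αL)).const_mul c
    have h2 := ((hasDerivAt_id x).div h1 hdne).const_add s
    refine h2.congr_deriv ?_
    simp only [hg', id]
    field_simp
    ring
  have hg'cont : ContinuousOn g' (Set.uIcc v μ) := by
    apply ContinuousOn.div continuousOn_const
    · fun_prop
    · intro x hx
      have := hden x hx
      positivity
  have hgpos : ∀ x ∈ Set.uIcc v μ, 0 < g x := by
    intro x hx
    have hdx := hden x hx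
    have hx0 : 0 < x := by
      rw [Set.uIcc_of_le hvμ] at hx
      exact lt_of_lt_of_le hv0 hx.1
    have hnn : 0 ≤ x / (c * (αH - αL * x)) := by positivity
    simp only [hg]
    linarith
  have hfcont : ContinuousOn f (g '' Set.uIcc v μ) := by
    have hne : ∀ u ∈ g '' Set.uIcc v μ, u ≠ 0 := by
      rintro u ⟨x, hx, rfl⟩
      exact (hgpos x hx).ne'
    apply ContinuousOn.mul continuousOn_const
    apply ContinuousOn.mul
    apply ContinuousOn.mul
    · exact ((continuousOn_id.sub continuousOn_const).pow m)
    · exact (Real.continuous_exp.comp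
        ((continuous_const.mul (continuous_id.sub continuous_const)).neg)).continuousOn
    · exact ContinuousOn.zpow₀ continuousOn_id (-2) (fun u hu => Or.inl (hne u hu))
  have hpoint : Set.EqOn
      (fun x => (x / (c * (αH - αL * x))) ^ m * Real.exp (-(ω * (x / (c * (αH - αL * x))))))
      (fun x => g' x • (f ∘ g) x) (Set.uIcc v μ) := by
    intro x hx
    have hdx := hden x hx
    simp only [Function.comp, smul_eq_mul, hf]
    have h1 : g x - s = x / (c * (αH - αL * x)) := by simp only [hg]; ring
    rw [h1]
    have hgx : g x = αH / (c * αL * (αH - αL * x)) := by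
      simp only [hg, hs]; field_simp; ring
    have hzp : (g x) ^ (-2:ℤ) = ((g x) ^ 2)⁻¹ := by rw [zpow_neg, zpow_ofNat]
    rw [hzp, hgx]
    simp only [hg']
    have hexpne := (Real.exp_pos (-(ω * (x / (c * (αH - αL * x)))))).ne'
    generalize x / (c * (αH - αL * x)) = y
    generalize Real.exp (-(ω * y)) = e
    generalize αH - αL * x = E at hdx
    have hE : E ≠ 0 := hdx.ne'
    field_simp
  have hsub := intervalIntegral.integral_comp_smul_deriv' hgderiv hg'cont hfcont
  rw [intervalIntegral.integral_congr hpoint, hsub]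
  -- now the u-side
  have hupos : ∀ u ∈ Set.uIcc (g v) (g μ), 0 < u := by
    intro u hu
    have h1 := hgpos v Set.left_mem_uIcc
    have h2 := hgpos μ Set.right_mem_uIcc
    have := hu.1
    rcases le_total (g v) (g μ) with h | h
    · rw [Set.uIcc_of_le h] at hu; exact lt_of_lt_of_le h1 hu.1
    · rw [Set.uIcc_of_ge h] at hu; exact lt_of_lt_of_le h2 hu.1
  have hfexpand : Set.EqOn f
      (fun u => ∑ q ∈ Finset.range (m + 1),
        (αH / (c * αL ^ 2) * ((m.choose q : ℝ) * (-s) ^ q * Real.exp (ω * s))) *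
          (u ^ ((m : ℤ) - q - 2) * Real.exp (-(ω * u)))) (Set.uIcc (g v) (g μ)) := by
    intro u hu
    have hu0 : u ≠ 0 := (hupos u hu).ne'
    simp only [hf]
    have hbinom : (u - s) ^ m =
        ∑ q ∈ Finset.range (m + 1), (-s) ^ q * u ^ (m - q) * (m.choose q : ℝ) := by
      rw [sub_eq_add_neg, add_comm]
      exact add_pow (-s) u m
    have hexp2 : Real.exp (-(ω * (u - s))) = Real.exp (ω * s) * Real.exp (-(ω * u)) := by
      rw [← Real.exp_add]; congr 1; ring
    rw [hbinom, hexp2, Finset.sum_mul, Finset.sum_mul, Finset.mul_sum]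
    apply Finset.sum_congr rfl
    intro q hq
    have hqm : q ≤ m := Nat.lt_succ_iff.mp (Finset.mem_range.mp hq)
    have hzfin : (u : ℝ) ^ ((m : ℤ) - q - 2) = u ^ (m - q : ℕ) * u ^ (-2 : ℤ) := by
      rw [← zpow_natCast u (m - q), ← zpow_add₀ hu0]
      congr 1
      push_cast [Nat.cast_sub hqm]
      ring
    rw [hzfin]
    ring
  rw [intervalIntegral.integral_congr hfexpand]
  have hintegrable : ∀ q ∈ Finset.range (m + 1), IntervalIntegrable
      (fun u : ℝ => (αH / (c * αL ^ 2) * ((m.choose q : ℝ) * (-s) ^ q * Real.exp (ω * s))) *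
        (u ^ ((m : ℤ) - q - 2) * Real.exp (-(ω * u)))) volume (g v) (g μ) := by
    intro q hq
    apply ContinuousOn.intervalIntegrable
    apply continuousOn_const.mul
    apply ContinuousOn.mul
    · exact ContinuousOn.zpow₀ continuousOn_id _ (fun u hu => Or.inl (hupos u hu).ne')
    · exact (Real.continuous_exp.comp
        ((continuous_const.mul continuous_id).neg)).continuousOn
  rw [intervalIntegral.integral_finset_sum hintegrable]
  rw [Finset.mul_sum]
  apply Finset.sum_congr rfl
  intro q hq
  rw [intervalIntegral.integral_const_mul]
  simp only [hg]
  ring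


lemma expand_G (a b : ℕ) (θ : ℝ) (t : ℝ) :
    (1 - Real.exp (-θ * t) * ∑ p ∈ Finset.range b, (θ * t) ^ p / p.factorial) ^ a =
      1 + ∑ p ∈ Finset.Icc 1 a, ∑ δ ∈ Finset.Nat.antidiagonalTuple b p,
        ((-1:ℝ) ^ p * (a.choose p : ℝ) * (Nat.multinomial Finset.univ δ : ℝ) *
          ∏ r : Fin b, (θ ^ (r:ℕ) / ((r:ℕ).factorial : ℝ)) ^ δ r) *
          (t ^ (∑ r : Fin b, (r:ℕ) * δ r) * Real.exp (-(((p:ℕ):ℝ) * θ * t))) := by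
  rw [sub_eq_add_neg, add_comm, add_pow]
  have hsplit : Finset.range (a+1) = insert 0 (Finset.Icc 1 a) := by
    ext n; simp [Finset.mem_range, Finset.mem_Icc]; omega
  rw [hsplit, Finset.sum_insert (by simp)]
  simp only [pow_zero, one_pow, Nat.choose_zero_right, Nat.cast_one, mul_one, one_mul]
  congr 1
  apply Finset.sum_congr rfl
  intro p hp
  have h1 : (-(Real.exp (-θ * t) * ∑ q ∈ Finset.range b, (θ * t) ^ q / q.factorial)) ^ p
      = (-1:ℝ)^p * Real.exp (-θ*t)^p * (∑ q ∈ Finset.range b, (θ * t) ^ q / (q.factorial:ℝ))^p := by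
    rw [neg_pow, mul_pow]
    ring
  rw [h1]
  have h2 : Real.exp (-θ*t) ^ p = Real.exp (-((p:ℝ) * θ * t)) := by
    rw [← Real.exp_nat_mul]
    congr 1
    ring
  rw [h2]
  have h3 : (∑ q ∈ Finset.range b, (θ * t) ^ q / (q.factorial:ℝ))
      = ∑ r : Fin b, (θ * t) ^ (r:ℕ) / ((r:ℕ).factorial:ℝ) :=
    (Fin.sum_univ_eq_sum_range (fun q => (θ * t) ^ q / (q.factorial:ℝ)) b).symm
  rw [h3, Finset.sum_pow_eq_sum_piAntidiag, Finset.piAntidiag_univ_fin_eq_antidiagonalTuple]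
  rw [Finset.mul_sum, Finset.sum_mul]
  apply Finset.sum_congr rfl
  intro δ hδ
  have hprod : ∏ r : Fin b, ((θ * t) ^ (r:ℕ) / ((r:ℕ).factorial:ℝ)) ^ δ r
      = (∏ r : Fin b, (θ ^ (r:ℕ) / ((r:ℕ).factorial : ℝ)) ^ δ r)
          * t ^ (∑ r : Fin b, (r:ℕ) * δ r) := by
    rw [← Finset.prod_pow_eq_pow_sum, ← Finset.prod_mul_distrib]
    apply Finset.prod_congr rfl
    intro r _
    have : (θ * t) ^ (r:ℕ) / ((r:ℕ).factorial:ℝ) = θ ^ (r:ℕ) / ((r:ℕ).factorial:ℝ) * t ^ (r:ℕ) := by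
      rw [mul_pow]; ring
    rw [this, mul_pow, ← pow_mul]
  rw [hprod]
  ring



/-- Exact closed form of the average BLER of the high-priority user (Theorem 1,
likewise Theorem 3 with the LCS parameters): with
`G(x) = (1 − e^{−θx} Σ_{p<b} (θx)^p/p!)^a`, `B_x = x/(c(α_H − α_L x))`,
`φ_H = 1/(cα_L) + B_v`, `κ_H = 1/(cα_L) + B_μ`, `ω = pθ`, `φ̂ = φ(δ) − q − 2`,
`χ√N ∫_v^μ G(B_x) dx
  = 1 + (χ α_H √N/(c α_L²)) Σ_{p=1}^{a} Σ_{δ} Σ_{q=0}^{φ(δ)}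
      C(φ(δ),q) (−1/(cα_L))^q (−1)^p C(a,p) (p!/(δ₀!⋯δ_{b−1}!))
      (Π_r (θ^r/r!)^{δ_r}) e^{ω/(cα_L)} A(p,δ,q)`,
where `A` is given by the three-case formula (incomplete gamma for `φ̂ ≥ 0`,
exponential-integral terms for `φ̂ = −1` and `φ̂ = −2`). -/
theorem stmt_18 (a b : ℕ) (ha : 1 ≤ a) (hb : 1 ≤ b)
    (θ c αH αL χ N β : ℝ) (hθ : 0 < θ) (hc : 0 < c) (hαH : 0 < αH) (hαL : 0 < αL)
    (hχ : 0 < χ) (hN : 0 < N) (hβ : 0 < β)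
    (v μ : ℝ) (hv : v = β - 1 / (2 * χ * Real.sqrt N))
    (hμ : μ = β + 1 / (2 * χ * Real.sqrt N)) (hv0 : 0 < v) (hμαβ : μ < αH / αL)
    (G : ℝ → ℝ)
    (hG : ∀ x, G x =
      (1 - Real.exp (-θ * x) * ∑ p ∈ Finset.range b, (θ * x) ^ p / p.factorial) ^ a)
    (B : ℝ → ℝ) (hB : ∀ x, B x = x / (c * (αH - αL * x)))
    (φH κH : ℝ) (hφH : φH = 1 / (c * αL) + B v) (hκH : κH = 1 / (c * αL) + B μ)
    (A : ℕ → ℤ → ℝ)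
    (hA : ∀ (p : ℕ) (φhat : ℤ),
      A p φhat =
        if 0 ≤ φhat then
          ((p : ℝ) * θ) ^ (-φhat - 1) *
            ((∫ t in Set.Ioi ((p : ℝ) * θ * φH), t ^ φhat * Real.exp (-t)) -
              ∫ t in Set.Ioi ((p : ℝ) * θ * κH), t ^ φhat * Real.exp (-t))
        else if φhat = -1 then
          (∫ t in Set.Ioi ((p : ℝ) * θ * φH), t⁻¹ * Real.exp (-t)) -
            ∫ t in Set.Ioi ((p : ℝ) * θ * κH), t⁻¹ * Real.exp (-t)
        else
          (p : ℝ) * θ *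
              ((∫ t in Set.Ioi ((p : ℝ) * θ * κH), t⁻¹ * Real.exp (-t)) -
                ∫ t in Set.Ioi ((p : ℝ) * θ * φH), t⁻¹ * Real.exp (-t)) +
            Real.exp (-((p : ℝ) * θ) * φH) / φH -
            Real.exp (-((p : ℝ) * θ) * κH) / κH) :
    χ * Real.sqrt N * ∫ x in v..μ, G (B x) =
      1 + χ * αH * Real.sqrt N / (c * αL ^ 2) *
        ∑ p ∈ Finset.Icc 1 a, ∑ δ ∈ Finset.Nat.antidiagonalTuple b p,
          ∑ q ∈ Finset.range ((∑ r : Fin b, (r : ℕ) * δ r) + 1),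
            ((∑ r : Fin b, (r : ℕ) * δ r).choose q : ℝ) * (-(1 / (c * αL))) ^ q *
              (-1 : ℝ) ^ p * (a.choose p : ℝ) * (Nat.multinomial Finset.univ δ : ℝ) *
              (∏ r : Fin b, (θ ^ (r : ℕ) / ((r : ℕ).factorial : ℝ)) ^ δ r) *
              Real.exp ((p : ℝ) * θ / (c * αL)) *
              A p (((∑ r : Fin b, (r : ℕ) * δ r : ℕ) : ℤ) - q - 2) := by
  have hsN : 0 < Real.sqrt N := Real.sqrt_pos.mpr hN
  have hvμ : v < μ := by
    rw [hv, hμ]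
    have h : 0 < 1 / (2 * χ * Real.sqrt N) := by positivity
    linarith
  have hden : ∀ x ∈ Set.uIcc v μ, 0 < αH - αL * x := by
    intro x hx
    rw [Set.uIcc_of_le hvμ.le] at hx
    have h1 : x < αH / αL := lt_of_le_of_lt hx.2 hμαβ
    have h2 := (lt_div_iff₀ hαL).mp h1
    linarith
  have hdv : 0 < αH - αL * v := hden v Set.left_mem_uIcc
  have hdμ : 0 < αH - αL * μ := hden μ Set.right_mem_uIcc
  have hφHpos : 0 < 1/(c*αL) + v/(c*(αH - αL*v)) := by positivity
  have hφκ : 1/(c*αL) + v/(c*(αH-αL*v)) ≤ 1/(c*αL) + μ/(c*(αH-αL*μ)) := by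
    have hdiff : μ/(c*(αH-αL*μ)) - v/(c*(αH-αL*v))
        = αH*(μ-v)/(c*(αH-αL*μ)*(αH-αL*v)) := by
      rw [div_sub_div _ _ (by positivity) (by positivity), div_eq_div_iff (by positivity) (by positivity)]
      ring
    have hnn : 0 ≤ αH*(μ-v)/(c*(αH-αL*μ)*(αH-αL*v)) :=
      div_nonneg (mul_nonneg hαH.le (by linarith)) (by positivity)
    linarith
  have key : ∀ p ∈ Finset.Icc 1 a, ∀ δ ∈ Finset.Nat.antidiagonalTuple b p,
      (∫ x in v..μ, (B x) ^ (∑ r : Fin b, (r:ℕ) * δ r) * Real.exp (-((p:ℝ) * θ * B x))) =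
      αH / (c*αL^2) * ∑ q ∈ Finset.range ((∑ r : Fin b, (r:ℕ) * δ r) + 1),
        ((∑ r : Fin b, (r:ℕ) * δ r).choose q : ℝ) * (-(1/(c*αL)))^q *
          Real.exp ((p:ℝ)*θ * (1/(c*αL))) *
          A p (((∑ r : Fin b, (r:ℕ) * δ r : ℕ):ℤ) - q - 2) := by
    intro p hp δ hδ
    set m := ∑ r : Fin b, (r:ℕ) * δ r with hm
    have hp1 : 1 ≤ p := (Finset.mem_Icc.mp hp).1
    have hppos : (0:ℝ) < (p:ℝ) := by exact_mod_cast hp1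
    have hω : 0 < (p:ℝ) * θ := mul_pos hppos hθ
    have hmain := key_main hc hαL hαH hv0 hvμ.le hμαβ ((p:ℝ)*θ) hω m
    simp only [hB]
    rw [hmain]
    congr 1
    apply Finset.sum_congr rfl
    intro q hq
    have hqm : q ≤ m := Nat.lt_succ_iff.mp (Finset.mem_range.mp hq)
    congr 1
    rw [hA]
    simp only [hφH, hκH, hB]
    set k : ℤ := (m:ℤ) - (q:ℤ) - 2 with hk
    by_cases h0 : 0 ≤ k
    · rw [if_pos h0]
      exact key_nonneg hω hφHpos hφκ k h0
    · rw [if_neg h0]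
      by_cases h1 : k = -1
      · rw [if_pos h1, h1]
        simp only [zpow_neg_one]
        exact key_neg1 hω hφHpos hφκ
      · have h2 : k = -2 := by omega
        rw [if_neg h1, h2]
        simp only [neg_mul]
        exact key_neg2 hω hφHpos hφκ
  have hGx : ∀ x : ℝ, G (B x) = 1 + ∑ p ∈ Finset.Icc 1 a,
      ∑ δ ∈ Finset.Nat.antidiagonalTuple b p,
        ((-1:ℝ) ^ p * (a.choose p : ℝ) * (Nat.multinomial Finset.univ δ : ℝ) *
          ∏ r : Fin b, (θ ^ (r:ℕ) / ((r:ℕ).factorial : ℝ)) ^ δ r) *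
          ((B x) ^ (∑ r : Fin b, (r:ℕ) * δ r) * Real.exp (-((p:ℝ) * θ * B x))) := by
    intro x
    rw [hG]
    exact expand_G a b θ (B x)
  have hBc : ContinuousOn (fun x : ℝ => x / (c * (αH - αL * x))) (Set.uIcc v μ) :=
    ContinuousOn.div continuousOn_id (by fun_prop)
      (fun x hx => by have := hden x hx; positivity)
  have hintegr : ∀ p ∈ Finset.Icc 1 a, ∀ δ ∈ Finset.Nat.antidiagonalTuple b p,
      IntervalIntegrable (fun x =>
        ((-1:ℝ) ^ p * (a.choose p : ℝ) * (Nat.multinomial Finset.univ δ : ℝ) *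
          ∏ r : Fin b, (θ ^ (r:ℕ) / ((r:ℕ).factorial : ℝ)) ^ δ r) *
          ((B x) ^ (∑ r : Fin b, (r:ℕ) * δ r) * Real.exp (-((p:ℝ) * θ * B x))))
        volume v μ := by
    intro p hp δ hδ
    apply ContinuousOn.intervalIntegrable
    simp only [hB]
    exact continuousOn_const.mul ((hBc.pow _).mul
      (Real.continuous_exp.comp_continuousOn ((continuousOn_const.mul hBc).neg)))
  have hintegrP : ∀ p ∈ Finset.Icc 1 a, IntervalIntegrable (fun x =>
      ∑ δ ∈ Finset.Nat.antidiagonalTuple b p,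
        ((-1:ℝ) ^ p * (a.choose p : ℝ) * (Nat.multinomial Finset.univ δ : ℝ) *
          ∏ r : Fin b, (θ ^ (r:ℕ) / ((r:ℕ).factorial : ℝ)) ^ δ r) *
          ((B x) ^ (∑ r : Fin b, (r:ℕ) * δ r) * Real.exp (-((p:ℝ) * θ * B x)))) volume v μ := by
    intro p hp
    have h := IntervalIntegrable.sum (μ := volume) (Finset.Nat.antidiagonalTuple b p)
      (fun δ hδ => hintegr p hp δ hδ)
    convert h using 1
    · rfl
    funext x
    simp
  have hintegrS : IntervalIntegrable (fun x => ∑ p ∈ Finset.Icc 1 a,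
      ∑ δ ∈ Finset.Nat.antidiagonalTuple b p,
        ((-1:ℝ) ^ p * (a.choose p : ℝ) * (Nat.multinomial Finset.univ δ : ℝ) *
          ∏ r : Fin b, (θ ^ (r:ℕ) / ((r:ℕ).factorial : ℝ)) ^ δ r) *
          ((B x) ^ (∑ r : Fin b, (r:ℕ) * δ r) * Real.exp (-((p:ℝ) * θ * B x)))) volume v μ := by
    have h := IntervalIntegrable.sum (μ := volume) (Finset.Icc 1 a)
      (f := fun p => (fun x => ∑ δ ∈ Finset.Nat.antidiagonalTuple b p,
        ((-1:ℝ) ^ p * (a.choose p : ℝ) * (Nat.multinomial Finset.univ δ : ℝ) *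
          ∏ r : Fin b, (θ ^ (r:ℕ) / ((r:ℕ).factorial : ℝ)) ^ δ r) *
          ((B x) ^ (∑ r : Fin b, (r:ℕ) * δ r) * Real.exp (-((p:ℝ) * θ * B x)))))
      (fun p hp => hintegrP p hp)
    convert h using 1
    · rfl
    funext x
    simp
  have hIG : (∫ x in v..μ, G (B x)) = (μ - v) + ∑ p ∈ Finset.Icc 1 a,
      ∑ δ ∈ Finset.Nat.antidiagonalTuple b p,
        ((-1:ℝ) ^ p * (a.choose p : ℝ) * (Nat.multinomial Finset.univ δ : ℝ) *
          ∏ r : Fin b, (θ ^ (r:ℕ) / ((r:ℕ).factorial : ℝ)) ^ δ r) *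
          (∫ x in v..μ, (B x) ^ (∑ r : Fin b, (r:ℕ) * δ r) * Real.exp (-((p:ℝ) * θ * B x))) := by
    simp only [hGx]
    rw [intervalIntegral.integral_add intervalIntegrable_const hintegrS]
    rw [intervalIntegral.integral_const, smul_eq_mul, mul_one]
    congr 1
    rw [intervalIntegral.integral_finset_sum (fun p hp => hintegrP p hp)]
    apply Finset.sum_congr rfl
    intro p hp
    rw [intervalIntegral.integral_finset_sum (fun δ hδ => hintegr p hp δ hδ)]
    apply Finset.sum_congr rfl
    intro δ hδ
    rw [intervalIntegral.integral_const_mul]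
  rw [hIG, mul_add]
  have h1 : χ * Real.sqrt N * (μ - v) = 1 := by
    rw [hv, hμ]
    field_simp
    ring
  rw [h1]
  congr 1
  have hsum : ∑ p ∈ Finset.Icc 1 a, ∑ δ ∈ Finset.Nat.antidiagonalTuple b p,
      ((-1:ℝ) ^ p * (a.choose p : ℝ) * (Nat.multinomial Finset.univ δ : ℝ) *
        ∏ r : Fin b, (θ ^ (r:ℕ) / ((r:ℕ).factorial : ℝ)) ^ δ r) *
        (∫ x in v..μ, (B x) ^ (∑ r : Fin b, (r:ℕ) * δ r) * Real.exp (-((p:ℝ) * θ * B x)))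
      = ∑ p ∈ Finset.Icc 1 a, ∑ δ ∈ Finset.Nat.antidiagonalTuple b p,
      ((-1:ℝ) ^ p * (a.choose p : ℝ) * (Nat.multinomial Finset.univ δ : ℝ) *
        ∏ r : Fin b, (θ ^ (r:ℕ) / ((r:ℕ).factorial : ℝ)) ^ δ r) *
        (αH / (c*αL^2) * ∑ q ∈ Finset.range ((∑ r : Fin b, (r:ℕ) * δ r) + 1),
          ((∑ r : Fin b, (r:ℕ) * δ r).choose q : ℝ) * (-(1/(c*αL)))^q *
            Real.exp ((p:ℝ)*θ * (1/(c*αL))) *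
            A p (((∑ r : Fin b, (r:ℕ) * δ r : ℕ):ℤ) - q - 2)) := by
    apply Finset.sum_congr rfl
    intro p hp
    apply Finset.sum_congr rfl
    intro δ hδ
    rw [key p hp δ hδ]
  rw [hsum]
  simp only [Finset.mul_sum, mul_one_div]
  apply Finset.sum_congr rfl
  intro p hp
  apply Finset.sum_congr rfl
  intro δ hδ
  apply Finset.sum_congr rfl
  intro q hq
  ring
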